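/- Let q ≥ 2 be an integer, let A be a nonnegative, nonzero, symmetric q×q real matrix, and let 𝒢 be a family of finite simple graphs. Suppose there exist constants r > 1 and M > 0 such that for all z in the open disk 𝔻_r of radius r, all G ∈ 𝒢, all vertices v ∈ V(G), all i ∈ [q] and all boundary conditions σ : Λ → [q] with Λ ⊆ V(G) ∖ {v}, the ratio P^σ_{G,v,i;A} has no pole at z and satisfies |P^σ_{G,v,i;A}(z)| ≤ M. Then there exists C > 0 such that the graph homomorphism measure μ_{G,A} satisfies strong spatial mixing on 𝒢 with exponential rate r: for every G ∈ 𝒢, v ∈ V(G), i ∈ [q], Λ ⊆ V(G)∖{v} and boundary conditions σ, τ on Λ, |Pr_μ[Ψ(v)=i | σ] − Pr_μ[Ψ(v)=i | τ]| ≤ C·r^{−d_G(v,σ≠τ)}. -/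

import Mathlib

open Finset

noncomputable section

namespace GraphHom

open scoped Classical

variable {V : Type*} {q : ℕ}

/-- The weight of an (unordered) edge `e` under the coloring `ψ` and the matrix `B`.
For a symmetric matrix `B` and `e = {u,w}` this is exactly `B (ψ u) (ψ w)`. -/
def edgeWeight {R : Type*} [Field R] (B : Matrix (Fin q) (Fin q) R) (ψ : V → Fin q)
    (e : Sym2 V) : R :=
  Sym2.lift ⟨fun u w => (B (ψ u) (ψ w) + B (ψ w) (ψ u)) / 2, fun u w => by ring⟩ e

/-- The edges of `G` as a `Finset`. -/
def edges [Fintype V] (G : SimpleGraph V) : Finset (Sym2 V) :=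
  G.edgeSet.toFinite.toFinset

/-- The graph homomorphism partition function with boundary condition `σ` on `Λ`:
`Z^σ_G(B) = ∑_{ψ : V → [q], ψ|_Λ = σ|_Λ} ∏_{uv ∈ E} B_{ψ(u),ψ(v)}`. -/
def Zcond {R : Type*} [Field R] [Fintype V] (G : SimpleGraph V)
    (B : Matrix (Fin q) (Fin q) R) (Λ : Finset V) (σ : V → Fin q) : R :=
  ∑ ψ : V → Fin q, if ∀ u ∈ Λ, ψ u = σ u then ∏ e ∈ edges G, edgeWeight B ψ e else 0

/-- The interpolation matrix `J + z(A − J)`, i.e. the matrix with entries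
`1 + z(A_{ij} − 1)`, for a real matrix `A`. -/
def intMat (A : Matrix (Fin q) (Fin q) ℝ) (z : ℂ) : Matrix (Fin q) (Fin q) ℂ :=
  fun i j => 1 + z * ((A i j : ℂ) - 1)

/-- The ratio `P^σ_{G,v,i;A}(z) = Z^{σ_{v,i}}_G(J + z(A−J)) / Z^σ_G(J + z(A−J))`. -/
def ratio [Fintype V] (G : SimpleGraph V) (A : Matrix (Fin q) (Fin q) ℝ)
    (Λ : Finset V) (σ : V → Fin q) (v : V) (i : Fin q) (z : ℂ) : ℂ :=
  Zcond G (intMat A z) (insert v Λ) (Function.update σ v i) / Zcond G (intMat A z) Λ σ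

/-- The conditional probability `Pr_μ[Ψ(v) = i ∣ σ]` in the graph homomorphism measure
`μ_{G,A}`:  `Z^{σ_{v,i}}_G(A) / Z^σ_G(A)`. -/
def condProb [Fintype V] (G : SimpleGraph V) (A : Matrix (Fin q) (Fin q) ℝ)
    (Λ : Finset V) (σ : V → Fin q) (v : V) (i : Fin q) : ℝ :=
  Zcond G A (insert v Λ) (Function.update σ v i) / Zcond G A Λ σ

/-- `G` has maximum degree at most `Δ`. -/
def MaxDegLE [Fintype V] (G : SimpleGraph V) (Δ : ℕ) : Prop :=
  ∀ v : V, (univ.filter fun u => G.Adj v u).card ≤ Δ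

end GraphHom

namespace GraphHom
open scoped Classical

section Aux

open Polynomial

variable {V : Type*} [Fintype V] {q : ℕ}

lemma edgeWeight_mk {R : Type*} [Field R] (B : Matrix (Fin q) (Fin q) R) (ψ : V → Fin q)
    (a b : V) : edgeWeight B ψ s(a, b) = (B (ψ a) (ψ b) + B (ψ b) (ψ a)) / 2 := rfl

lemma edgeWeight_congr {R : Type*} [Field R] {B : Matrix (Fin q) (Fin q) R}
    {ψ χ : V → Fin q} {e : Sym2 V} (h : ∀ x ∈ e, ψ x = χ x) :
    edgeWeight B ψ e = edgeWeight B χ e := by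
  induction e using Sym2.ind with
  | _ a b =>
    rw [edgeWeight_mk, edgeWeight_mk, h a (by simp), h b (by simp)]

/-- The complex matrix `A - J`. -/
def wC (A : Matrix (Fin q) (Fin q) ℝ) : Matrix (Fin q) (Fin q) ℂ :=
  fun i j => (A i j : ℂ) - 1

lemma edgeWeight_intMat (A : Matrix (Fin q) (Fin q) ℝ) (z : ℂ) (ψ : V → Fin q) (e : Sym2 V) :
    edgeWeight (intMat A z) ψ e = 1 + z * edgeWeight (wC A) ψ e := by
  induction e using Sym2.ind with
  | _ a b =>
    simp only [edgeWeight_mk, intMat, wC]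
    ring

/-- Coefficient data for the edge-subset expansion. -/
noncomputable def coefC (A : Matrix (Fin q) (Fin q) ℝ) (S : Finset (Sym2 V)) (Λ : Finset V)
    (σ : V → Fin q) : ℂ :=
  ∑ ψ : V → Fin q, if ∀ u ∈ Λ, ψ u = σ u then ∏ e ∈ S, edgeWeight (wC A) ψ e else 0

/-- The conditioned partition function as a polynomial in the interpolation variable. -/
noncomputable def Zpoly (A : Matrix (Fin q) (Fin q) ℝ) (G : SimpleGraph V) (Λ : Finset V)
    (σ : V → Fin q) : Polynomial ℂ :=
  ∑ S ∈ (edges G).powerset, Polynomial.C (coefC A S Λ σ) * Polynomial.X ^ S.card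

lemma Zpoly_eval (A : Matrix (Fin q) (Fin q) ℝ) (G : SimpleGraph V) (Λ : Finset V)
    (σ : V → Fin q) (z : ℂ) : (Zpoly A G Λ σ).eval z = Zcond G (intMat A z) Λ σ := by
  rw [Zpoly, Polynomial.eval_finset_sum, Zcond]
  simp only [Polynomial.eval_mul, Polynomial.eval_C, Polynomial.eval_pow, Polynomial.eval_X]
  have hprod : ∀ ψ : V → Fin q, ∏ e ∈ edges G, edgeWeight (intMat A z) ψ e
      = ∑ S ∈ (edges G).powerset, z ^ S.card * ∏ e ∈ S, edgeWeight (wC A) ψ e := by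
    intro ψ
    calc ∏ e ∈ edges G, edgeWeight (intMat A z) ψ e
        = ∏ e ∈ edges G, (z * edgeWeight (wC A) ψ e + 1) := by
          refine Finset.prod_congr rfl fun e _ => ?_
          rw [edgeWeight_intMat]; ring
      _ = ∑ S ∈ (edges G).powerset,
            (∏ e ∈ S, (z * edgeWeight (wC A) ψ e)) * ∏ _e ∈ edges G \ S, (1 : ℂ) :=
          Finset.prod_add _ _ _
      _ = _ := by
          refine Finset.sum_congr rfl fun S _ => ?_
          rw [Finset.prod_const_one, mul_one, Finset.prod_mul_distrib, Finset.prod_const]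
  calc (∑ S ∈ (edges G).powerset, coefC A S Λ σ * z ^ S.card)
      = ∑ S ∈ (edges G).powerset, ∑ ψ : V → Fin q,
          (if ∀ u ∈ Λ, ψ u = σ u then z ^ S.card * ∏ e ∈ S, edgeWeight (wC A) ψ e else 0) := by
        refine Finset.sum_congr rfl fun S _ => ?_
        rw [coefC, Finset.sum_mul]
        refine Finset.sum_congr rfl fun ψ _ => ?_
        split_ifs
        · ring
        · exact zero_mul _
    _ = ∑ ψ : V → Fin q, ∑ S ∈ (edges G).powerset,
          (if ∀ u ∈ Λ, ψ u = σ u then z ^ S.card * ∏ e ∈ S, edgeWeight (wC A) ψ e else 0) :=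
        Finset.sum_comm
    _ = _ := by
        refine Finset.sum_congr rfl fun ψ _ => ?_
        by_cases hc : ∀ u ∈ Λ, ψ u = σ u
        · simp only [if_pos hc]
          exact (hprod ψ).symm
        · simp only [if_neg hc, Finset.sum_const_zero]

/-- Swap two colorings across a vertex set `K`. -/
noncomputable def swapCol (K : V → Prop) (ψ φ : V → Fin q) : V → Fin q :=
  fun u => if K u then ψ u else φ u

/-- Swap two edge sets across a vertex set `K`. -/
noncomputable def swapSet (K : V → Prop) (S T : Finset (Sym2 V)) : Finset (Sym2 V) :=
  S.filter (fun e => ∀ y ∈ e, K y) ∪ T.filter (fun e => ¬ ∀ y ∈ e, K y)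

lemma swapSet_subset {K : V → Prop} {S T U : Finset (Sym2 V)} (hS : S ⊆ U) (hT : T ⊆ U) :
    swapSet K S T ⊆ U :=
  Finset.union_subset ((Finset.filter_subset _ _).trans hS) ((Finset.filter_subset _ _).trans hT)

lemma swapSet_union (K : V → Prop) (S T : Finset (Sym2 V)) :
    swapSet K S T ∪ swapSet K T S = S ∪ T := by
  ext e
  simp only [swapSet, Finset.mem_union, Finset.mem_filter]
  tauto

lemma swapSet_disjoint (K : V → Prop) (S T : Finset (Sym2 V)) :
    Disjoint (S.filter (fun e => ∀ y ∈ e, K y)) (T.filter (fun e => ¬ ∀ y ∈ e, K y)) := by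
  rw [Finset.disjoint_left]
  intro e he he'
  exact (Finset.mem_filter.1 he').2 (Finset.mem_filter.1 he).2

lemma swapSet_card (K : V → Prop) (S T : Finset (Sym2 V)) :
    (swapSet K S T).card + (swapSet K T S).card = S.card + T.card := by
  rw [swapSet, swapSet, Finset.card_union_of_disjoint (swapSet_disjoint K S T),
    Finset.card_union_of_disjoint (swapSet_disjoint K T S)]
  have h1 := Finset.card_filter_add_card_filter_not (s := S) (fun e => ∀ y ∈ e, K y)
  have h2 := Finset.card_filter_add_card_filter_not (s := T) (fun e => ∀ y ∈ e, K y)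
  omega

lemma swapSet_swapSet (K : V → Prop) (S T : Finset (Sym2 V)) :
    swapSet K (swapSet K S T) (swapSet K T S) = S := by
  ext e
  simp only [swapSet, Finset.mem_union, Finset.mem_filter]
  tauto

lemma swapCol_swapCol (K : V → Prop) (ψ φ : V → Fin q) :
    swapCol K (swapCol K ψ φ) (swapCol K φ ψ) = ψ := by
  funext u
  simp only [swapCol]
  split_ifs <;> rfl

lemma prod_swapSet {R : Type*} [Field R] (B : Matrix (Fin q) (Fin q) R) (K : V → Prop)
    {S T : Finset (Sym2 V)}
    (hcl : ∀ e ∈ S ∪ T, ¬ (∀ y ∈ e, K y) → ∀ y ∈ e, ¬ K y) (ψ φ : V → Fin q) :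
    (∏ e ∈ swapSet K S T, edgeWeight B (swapCol K ψ φ) e) *
      ∏ e ∈ swapSet K T S, edgeWeight B (swapCol K φ ψ) e
    = (∏ e ∈ S, edgeWeight B ψ e) * ∏ e ∈ T, edgeWeight B φ e := by
  rw [swapSet, swapSet, Finset.prod_union (swapSet_disjoint K S T),
    Finset.prod_union (swapSet_disjoint K T S)]
  have e1 : ∏ e ∈ S.filter (fun e => ∀ y ∈ e, K y), edgeWeight B (swapCol K ψ φ) e
      = ∏ e ∈ S.filter (fun e => ∀ y ∈ e, K y), edgeWeight B ψ e := by
    refine Finset.prod_congr rfl fun e he => edgeWeight_congr fun y hy => ?_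
    simp only [swapCol, if_pos ((Finset.mem_filter.1 he).2 y hy)]
  have e2 : ∏ e ∈ T.filter (fun e => ¬ ∀ y ∈ e, K y), edgeWeight B (swapCol K ψ φ) e
      = ∏ e ∈ T.filter (fun e => ¬ ∀ y ∈ e, K y), edgeWeight B φ e := by
    refine Finset.prod_congr rfl fun e he => edgeWeight_congr fun y hy => ?_
    have hmem := Finset.mem_filter.1 he
    have := hcl e (Finset.mem_union_right _ hmem.1) hmem.2 y hy
    simp only [swapCol, if_neg this]
  have e3 : ∏ e ∈ T.filter (fun e => ∀ y ∈ e, K y), edgeWeight B (swapCol K φ ψ) e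
      = ∏ e ∈ T.filter (fun e => ∀ y ∈ e, K y), edgeWeight B φ e := by
    refine Finset.prod_congr rfl fun e he => edgeWeight_congr fun y hy => ?_
    simp only [swapCol, if_pos ((Finset.mem_filter.1 he).2 y hy)]
  have e4 : ∏ e ∈ S.filter (fun e => ¬ ∀ y ∈ e, K y), edgeWeight B (swapCol K φ ψ) e
      = ∏ e ∈ S.filter (fun e => ¬ ∀ y ∈ e, K y), edgeWeight B ψ e := by
    refine Finset.prod_congr rfl fun e he => edgeWeight_congr fun y hy => ?_
    have hmem := Finset.mem_filter.1 he
    have := hcl e (Finset.mem_union_left _ hmem.1) hmem.2 y hy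
    simp only [swapCol, if_neg this]
  rw [e1, e2, e3, e4]
  calc ((∏ e ∈ S.filter (fun e => ∀ y ∈ e, K y), edgeWeight B ψ e) *
          ∏ e ∈ T.filter (fun e => ¬ ∀ y ∈ e, K y), edgeWeight B φ e) *
        ((∏ e ∈ T.filter (fun e => ∀ y ∈ e, K y), edgeWeight B φ e) *
          ∏ e ∈ S.filter (fun e => ¬ ∀ y ∈ e, K y), edgeWeight B ψ e)
      = ((∏ e ∈ S.filter (fun e => ∀ y ∈ e, K y), edgeWeight B ψ e) *
          ∏ e ∈ S.filter (fun e => ¬ ∀ y ∈ e, K y), edgeWeight B ψ e) *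
        ((∏ e ∈ T.filter (fun e => ∀ y ∈ e, K y), edgeWeight B φ e) *
          ∏ e ∈ T.filter (fun e => ¬ ∀ y ∈ e, K y), edgeWeight B φ e) := by ring
    _ = _ := by
        rw [Finset.prod_filter_mul_prod_filter_not, Finset.prod_filter_mul_prod_filter_not]

lemma reach_edist_le {G : SimpleGraph V} {E0 : Finset (Sym2 V)} (hE : E0 ⊆ edges G) {v u : V}
    (h : (SimpleGraph.fromEdgeSet (↑E0 : Set (Sym2 V))).Reachable v u) :
    G.edist v u ≤ (E0.card : ℕ∞) := by
  classical
  obtain ⟨w⟩ := h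
  have hle : SimpleGraph.fromEdgeSet (↑E0 : Set (Sym2 V)) ≤ G := by
    intro a b hab
    rw [SimpleGraph.fromEdgeSet_adj] at hab
    have h1 : s(a, b) ∈ edges G := hE (by exact_mod_cast hab.1)
    rwa [edges, Set.Finite.mem_toFinset, SimpleGraph.mem_edgeSet] at h1
  set p := w.toPath with hp
  have hnodup : (p : (SimpleGraph.fromEdgeSet (↑E0 : Set (Sym2 V))).Walk v u).edges.Nodup :=
    p.2.isTrail.edges_nodup
  have hsub : ∀ e ∈ (p : (SimpleGraph.fromEdgeSet (↑E0 : Set (Sym2 V))).Walk v u).edges,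
      e ∈ E0 := by
    intro e he
    have h2 := (p : (SimpleGraph.fromEdgeSet (↑E0 : Set (Sym2 V))).Walk v u).edges_subset_edgeSet he
    rw [SimpleGraph.edgeSet_fromEdgeSet] at h2
    exact_mod_cast h2.1
  have hlen : (p : (SimpleGraph.fromEdgeSet (↑E0 : Set (Sym2 V))).Walk v u).length ≤ E0.card := by
    rw [← SimpleGraph.Walk.length_edges, ← List.toFinset_card_of_nodup hnodup]
    exact Finset.card_le_card fun e he => hsub e (List.mem_toFinset.1 he)
  have h3 := SimpleGraph.edist_le ((p : (SimpleGraph.fromEdgeSet (↑E0 : Set (Sym2 V))).Walk v u).mapLe hle)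
  rw [SimpleGraph.Walk.length_map] at h3
  exact h3.trans (by exact_mod_cast hlen)

/-- The state space for the swapping involution. -/
abbrev SwapState (V : Type*) (q : ℕ) :=
  (Finset (Sym2 V) × Finset (Sym2 V)) × ((V → Fin q) × (V → Fin q))

/-- The vertex component predicate of a state. -/
def stK (v : V) (x : SwapState V q) : V → Prop :=
  fun u => (SimpleGraph.fromEdgeSet (↑(x.1.1 ∪ x.1.2) : Set (Sym2 V))).Reachable v u

/-- The swapping involution. -/
noncomputable def swapX (v : V) (x : SwapState V q) : SwapState V q :=
  ((swapSet (stK v x) x.1.1 x.1.2, swapSet (stK v x) x.1.2 x.1.1),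
   (swapCol (stK v x) x.2.1 x.2.2, swapCol (stK v x) x.2.2 x.2.1))

lemma stK_swapX (v : V) (x : SwapState V q) : stK v (swapX v x) = stK v x := by
  unfold stK swapX
  simp only [swapSet_union]

lemma swapX_swapX (v : V) (x : SwapState V q) : swapX v (swapX v x) = x := by
  have hK := stK_swapX v x
  show ((swapSet (stK v (swapX v x)) _ _, swapSet (stK v (swapX v x)) _ _),
    (swapCol (stK v (swapX v x)) _ _, swapCol (stK v (swapX v x)) _ _)) = x
  rw [hK]
  show ((swapSet (stK v x) (swapSet (stK v x) x.1.1 x.1.2) (swapSet (stK v x) x.1.2 x.1.1),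
      swapSet (stK v x) (swapSet (stK v x) x.1.2 x.1.1) (swapSet (stK v x) x.1.1 x.1.2)),
    (swapCol (stK v x) (swapCol (stK v x) x.2.1 x.2.2) (swapCol (stK v x) x.2.2 x.2.1),
      swapCol (stK v x) (swapCol (stK v x) x.2.2 x.2.1) (swapCol (stK v x) x.2.1 x.2.2))) = x
  rw [swapSet_swapSet, swapSet_swapSet, swapCol_swapCol, swapCol_swapCol]

/-- The constraint on a state. -/
def Cond (v : V) (i : Fin q) (Λ : Finset V) (σ τ : V → Fin q) (k : ℕ) (x : SwapState V q) :
    Prop :=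
  x.1.1.card + x.1.2.card = k ∧ (∀ u ∈ insert v Λ, x.2.1 u = Function.update σ v i u) ∧
    ∀ u ∈ Λ, x.2.2 u = τ u

lemma closure_stK {G : SimpleGraph V} {v : V} {x : SwapState V q}
    (hS : x.1.1 ⊆ edges G) (hT : x.1.2 ⊆ edges G) :
    ∀ e ∈ x.1.1 ∪ x.1.2, ¬ (∀ y ∈ e, stK v x y) → ∀ y ∈ e, ¬ stK v x y := by
  intro e he hne
  induction e using Sym2.ind with
  | _ a b =>
    have heG : s(a, b) ∈ edges G := (Finset.union_subset hS hT) he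
    rw [edges, Set.Finite.mem_toFinset, SimpleGraph.mem_edgeSet] at heG
    have hab : a ≠ b := heG.ne
    have hadj : (SimpleGraph.fromEdgeSet (↑(x.1.1 ∪ x.1.2) : Set (Sym2 V))).Adj a b := by
      rw [SimpleGraph.fromEdgeSet_adj]
      exact ⟨by exact_mod_cast he, hab⟩
    have hiff : stK v x a ↔ stK v x b :=
      ⟨fun h => h.trans hadj.reachable, fun h => h.trans hadj.symm.reachable⟩
    intro y hy hKy
    apply hne
    intro y' hy'
    rw [Sym2.mem_iff] at hy hy'
    rcases hy with rfl | rfl <;> rcases hy' with rfl | rfl <;> tauto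

lemma cond_transfer {G : SimpleGraph V} {v : V} {i : Fin q} {Λ : Finset V} (hv : v ∉ Λ)
    {σ τ : V → Fin q} {d k : ℕ} (hk : k < d)
    (hdist : ∀ u ∈ Λ, σ u ≠ τ u → (d : ℕ∞) ≤ G.edist v u)
    {x : SwapState V q} (hS : x.1.1 ⊆ edges G) (hT : x.1.2 ⊆ edges G)
    (hx : Cond v i Λ σ τ k x) : Cond v i Λ τ σ k (swapX v x) := by
  obtain ⟨hcard, hψ, hφ⟩ := hx
  have hagree : ∀ u ∈ Λ, stK v x u → σ u = τ u := by
    intro u hu hK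
    by_contra hne
    have h1 : (d : ℕ∞) ≤ G.edist v u := hdist u hu hne
    have h2 : G.edist v u ≤ ((x.1.1 ∪ x.1.2).card : ℕ∞) :=
      reach_edist_le (Finset.union_subset hS hT) hK
    have h3 : ((x.1.1 ∪ x.1.2).card : ℕ∞) ≤ (k : ℕ∞) := by
      rw [← hcard]
      exact_mod_cast Nat.cast_le.2 (Finset.card_union_le _ _)
    have h4 : (d : ℕ∞) ≤ (k : ℕ∞) := h1.trans (h2.trans h3)
    rw [Nat.cast_le] at h4
    omega
  have hKv : stK v x v := SimpleGraph.Reachable.refl v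
  refine ⟨?_, ?_, ?_⟩
  · show (swapSet (stK v x) x.1.1 x.1.2).card + (swapSet (stK v x) x.1.2 x.1.1).card = k
    rw [swapSet_card]; exact hcard
  · show ∀ u ∈ insert v Λ, swapCol (stK v x) x.2.1 x.2.2 u = Function.update τ v i u
    intro u hu
    rcases Finset.mem_insert.1 hu with rfl | huΛ
    · rw [Function.update_self]
      simp only [swapCol, if_pos hKv]
      have := hψ u (Finset.mem_insert_self u Λ)
      rwa [Function.update_self] at this
    · have huv : u ≠ v := fun h => hv (h ▸ huΛ)
      rw [Function.update_of_ne huv]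
      by_cases hK : stK v x u
      · simp only [swapCol, if_pos hK]
        have h5 := hψ u (Finset.mem_insert_of_mem huΛ)
        rw [Function.update_of_ne huv] at h5
        rw [h5]
        exact hagree u huΛ hK
      · simp only [swapCol, if_neg hK]
        exact hφ u huΛ
  · show ∀ u ∈ Λ, swapCol (stK v x) x.2.2 x.2.1 u = σ u
    intro u hu
    have huv : u ≠ v := fun h => hv (h ▸ hu)
    by_cases hK : stK v x u
    · simp only [swapCol, if_pos hK]
      rw [hφ u hu]
      exact (hagree u hu hK).symm
    · simp only [swapCol, if_neg hK]
      have h5 := hψ u (Finset.mem_insert_of_mem hu)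
      rwa [Function.update_of_ne huv] at h5

lemma coeff_mul_expand (a b : Finset (Sym2 V) → ℂ) (P : Finset (Finset (Sym2 V))) (k : ℕ) :
    ((∑ S ∈ P, Polynomial.C (a S) * Polynomial.X ^ S.card) *
      ∑ T ∈ P, Polynomial.C (b T) * Polynomial.X ^ T.card).coeff k
    = ∑ S ∈ P, ∑ T ∈ P, if S.card + T.card = k then a S * b T else 0 := by
  rw [Finset.sum_mul_sum, Polynomial.finset_sum_coeff]
  refine Finset.sum_congr rfl fun S _ => ?_
  rw [Polynomial.finset_sum_coeff]
  refine Finset.sum_congr rfl fun T _ => ?_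
  have h : (Polynomial.C (a S) * Polynomial.X ^ S.card) *
      (Polynomial.C (b T) * Polynomial.X ^ T.card)
      = Polynomial.C (a S * b T) * Polynomial.X ^ (S.card + T.card) := by
    rw [Polynomial.C_mul, pow_add]; ring
  rw [h, Polynomial.coeff_C_mul, Polynomial.coeff_X_pow]
  by_cases h1 : S.card + T.card = k
  · rw [if_pos h1.symm, if_pos h1, mul_one]
  · rw [if_neg (fun h' : k = S.card + T.card => h1 h'.symm), if_neg h1, mul_zero]

/-- The summand in the expanded double sum. -/
noncomputable def bigF (A : Matrix (Fin q) (Fin q) ℝ) (Λ : Finset V) (v : V) (k : ℕ)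
    (σ' τ' : V → Fin q) (x : SwapState V q) : ℂ :=
  if x.1.1.card + x.1.2.card = k ∧ (∀ u ∈ insert v Λ, x.2.1 u = σ' u) ∧
      ∀ u ∈ Λ, x.2.2 u = τ' u
  then (∏ e ∈ x.1.1, edgeWeight (wC A) x.2.1 e) * ∏ e ∈ x.1.2, edgeWeight (wC A) x.2.2 e
  else 0

lemma key_coeff (A : Matrix (Fin q) (Fin q) ℝ) (G : SimpleGraph V) (v : V) (i : Fin q)
    (Λ : Finset V) (hv : v ∉ Λ) (σ τ : V → Fin q) (d k : ℕ) (hk : k < d)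
    (hdist : ∀ u ∈ Λ, σ u ≠ τ u → (d : ℕ∞) ≤ G.edist v u) :
    (Zpoly A G (insert v Λ) (Function.update σ v i) * Zpoly A G Λ τ
      - Zpoly A G (insert v Λ) (Function.update τ v i) * Zpoly A G Λ σ).coeff k = 0 := by
  classical
  rw [Polynomial.coeff_sub, sub_eq_zero]
  rw [Zpoly, Zpoly, Zpoly, Zpoly, coeff_mul_expand, coeff_mul_expand]
  have expand : ∀ σ' τ' : V → Fin q,
      (∑ S ∈ (edges G).powerset, ∑ T ∈ (edges G).powerset,
        if S.card + T.card = k then coefC A S (insert v Λ) σ' * coefC A T Λ τ' else 0)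
      = ∑ x ∈ ((edges G).powerset ×ˢ (edges G).powerset) ×ˢ
            ((Finset.univ : Finset (V → Fin q)) ×ˢ Finset.univ),
          bigF A Λ v k σ' τ' x := by
    intro σ' τ'
    rw [Finset.sum_product, Finset.sum_product]
    refine Finset.sum_congr rfl fun S _ => Finset.sum_congr rfl fun T _ => ?_
    rw [Finset.sum_product]
    simp only [bigF]
    by_cases hc : S.card + T.card = k
    · simp only [hc, true_and, if_true]
      rw [coefC, coefC, Finset.sum_mul_sum]
      refine Finset.sum_congr rfl fun ψ _ => Finset.sum_congr rfl fun φ _ => ?_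
      by_cases hp : ∀ u ∈ insert v Λ, ψ u = σ' u
      · by_cases hq : ∀ u ∈ Λ, φ u = τ' u
        · rw [if_pos hp, if_pos hq, if_pos ⟨hp, hq⟩]
        · rw [if_pos hp, if_neg hq, if_neg (fun h => hq h.2), mul_zero]
      · by_cases hq : ∀ u ∈ Λ, φ u = τ' u
        · rw [if_neg hp, if_pos hq, if_neg (fun h => hp h.1), zero_mul]
        · rw [if_neg hp, if_neg hq, if_neg (fun h => hp h.1), zero_mul]
    · simp only [hc, false_and, if_false, Finset.sum_const_zero]
  rw [expand (Function.update σ v i) τ, expand (Function.update τ v i) σ]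
  refine Finset.sum_nbij' (swapX v) (swapX v) ?_ ?_ ?_ ?_ ?_
  · intro x hx
    simp only [Finset.mem_product, Finset.mem_powerset, Finset.mem_univ, and_true] at hx ⊢
    exact ⟨swapSet_subset hx.1 hx.2, swapSet_subset hx.2 hx.1⟩
  · intro x hx
    simp only [Finset.mem_product, Finset.mem_powerset, Finset.mem_univ, and_true] at hx ⊢
    exact ⟨swapSet_subset hx.1 hx.2, swapSet_subset hx.2 hx.1⟩
  · intro x _; exact swapX_swapX v x
  · intro x _; exact swapX_swapX v x
  · intro x hx
    simp only [Finset.mem_product, Finset.mem_powerset, Finset.mem_univ, and_true] at hx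
    obtain ⟨hS, hT⟩ := hx
    have hdist' : ∀ u ∈ Λ, τ u ≠ σ u → (d : ℕ∞) ≤ G.edist v u :=
      fun u hu hne => hdist u hu hne.symm
    rw [bigF, bigF]
    by_cases hcond : Cond v i Λ σ τ k x
    · have hcond' : Cond v i Λ τ σ k (swapX v x) := cond_transfer hv hk hdist hS hT hcond
      rw [if_pos ⟨hcond.1, hcond.2.1, hcond.2.2⟩, if_pos ⟨hcond'.1, hcond'.2.1, hcond'.2.2⟩]
      exact (prod_swapSet (wC A) (stK v x) (closure_stK hS hT) x.2.1 x.2.2).symm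
    · rw [if_neg (fun h => hcond ⟨h.1, h.2.1, h.2.2⟩), if_neg ?_]
      intro h
      have hcond2 : Cond v i Λ τ σ k (swapX v x) := ⟨h.1, h.2.1, h.2.2⟩
      have hS' : (swapX v x).1.1 ⊆ edges G := swapSet_subset hS hT
      have hT' : (swapX v x).1.2 ⊆ edges G := swapSet_subset hT hS
      have h6 := cond_transfer hv hk hdist' hS' hT' hcond2
      rw [swapX_swapX] at h6
      exact hcond h6

lemma Zcond_ofReal (A : Matrix (Fin q) (Fin q) ℝ) (G : SimpleGraph V) (Λ : Finset V)
    (σ : V → Fin q) : Zcond G (intMat A 1) Λ σ = ((Zcond G A Λ σ : ℝ) : ℂ) := by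
  have hw : ∀ (ψ : V → Fin q) (e : Sym2 V),
      edgeWeight (intMat A 1) ψ e = ((edgeWeight A ψ e : ℝ) : ℂ) := by
    intro ψ e
    induction e using Sym2.ind with
    | _ a b =>
      simp only [edgeWeight_mk, intMat]
      push_cast
      ring
  rw [Zcond, Zcond]
  push_cast [apply_ite (fun x : ℝ => (x : ℂ))]
  refine Finset.sum_congr rfl fun ψ _ => ?_
  split_ifs
  · exact Finset.prod_congr rfl fun e _ => hw ψ e
  · rfl

lemma main_aux (A : Matrix (Fin q) (Fin q) ℝ) (G : SimpleGraph V) (r M : ℝ)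
    (hr : 1 < r) (hM : 0 < M) (v : V) (i : Fin q) (Λ : Finset V) (hv : v ∉ Λ)
    (σ τ : V → Fin q) (d : ℕ)
    (hdist : ∀ u ∈ Λ, σ u ≠ τ u → (d : ℕ∞) ≤ G.edist v u)
    (hboundσ : ∀ z : ℂ, ‖z‖ < r →
      Zcond G (intMat A z) Λ σ ≠ 0 ∧ ‖ratio G A Λ σ v i z‖ ≤ M)
    (hboundτ : ∀ z : ℂ, ‖z‖ < r →
      Zcond G (intMat A z) Λ τ ≠ 0 ∧ ‖ratio G A Λ τ v i z‖ ≤ M) :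
    |condProb G A Λ σ v i - condProb G A Λ τ v i| ≤ 2 * M * r ^ (-(d : ℤ)) := by
  set Q1 := Zpoly A G (insert v Λ) (Function.update σ v i) with hQ1
  set Q2 := Zpoly A G Λ σ with hQ2
  set Q3 := Zpoly A G (insert v Λ) (Function.update τ v i) with hQ3
  set Q4 := Zpoly A G Λ τ with hQ4
  have hden : ∀ z : ℂ, ‖z‖ < r → Q2.eval z ≠ 0 ∧ Q4.eval z ≠ 0 := by
    intro z hz
    constructor
    · rw [hQ2, Zpoly_eval]; exact (hboundσ z hz).1
    · rw [hQ4, Zpoly_eval]; exact (hboundτ z hz).1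
  have hdiff_bound : ∀ z : ℂ, ‖z‖ < r →
      ‖Q1.eval z / Q2.eval z - Q3.eval z / Q4.eval z‖ ≤ 2 * M := by
    intro z hz
    have h1 := (hboundσ z hz).2
    have h2 := (hboundτ z hz).2
    rw [ratio, ← Zpoly_eval A G (insert v Λ) (Function.update σ v i) z,
      ← Zpoly_eval A G Λ σ z] at h1
    rw [ratio, ← Zpoly_eval A G (insert v Λ) (Function.update τ v i) z,
      ← Zpoly_eval A G Λ τ z] at h2
    calc ‖Q1.eval z / Q2.eval z - Q3.eval z / Q4.eval z‖
        ≤ ‖Q1.eval z / Q2.eval z‖ + ‖Q3.eval z / Q4.eval z‖ := norm_sub_le _ _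
      _ ≤ 2 * M := by rw [hQ1, hQ2, hQ3, hQ4]; linarith [h1, h2]
  have hdvd : Polynomial.X ^ d ∣ (Q1 * Q4 - Q3 * Q2) := by
    rw [Polynomial.X_pow_dvd_iff]
    intro k hk
    exact key_coeff A G v i Λ hv σ τ d k hk hdist
  obtain ⟨g, hg⟩ := hdvd
  set φf : ℂ → ℂ := fun z => g.eval z / (Q2.eval z * Q4.eval z) with hφf
  have hFeq : ∀ z : ℂ, Q2.eval z ≠ 0 → Q4.eval z ≠ 0 →
      Q1.eval z / Q2.eval z - Q3.eval z / Q4.eval z = z ^ d * φf z := by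
    intro z h2 h4
    have hnum : Q1.eval z * Q4.eval z - Q2.eval z * Q3.eval z = z ^ d * g.eval z := by
      have h' : (Q1 * Q4 - Q3 * Q2).eval z = (Polynomial.X ^ d * g).eval z := by rw [hg]
      simp only [Polynomial.eval_sub, Polynomial.eval_mul, Polynomial.eval_pow,
        Polynomial.eval_X] at h'
      linear_combination h'
    rw [hφf]
    rw [div_sub_div _ _ h2 h4, hnum]
    rw [mul_div_assoc]
  have hρbound : ∀ ρ : ℝ, 1 ≤ ρ → ρ < r → ‖φf 1‖ ≤ 2 * M / ρ ^ d := by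
    intro ρ hρ1 hρr
    have hρ0 : (0 : ℝ) < ρ := lt_of_lt_of_le one_pos hρ1
    have hdiffble : DifferentiableOn ℂ φf (Metric.closedBall 0 ρ) := by
      refine DifferentiableOn.div g.differentiable.differentiableOn
        ((Q2.differentiable.mul Q4.differentiable).differentiableOn) ?_
      intro z hz
      have hzρ : ‖z‖ ≤ ρ := by simpa [Metric.mem_closedBall, dist_zero_right] using hz
      have hzr : ‖z‖ < r := by
        exact lt_of_le_of_lt hzρ hρr
      exact mul_ne_zero (hden z hzr).1 (hden z hzr).2
    have hdc : DiffContOnCl ℂ φf (Metric.ball 0 ρ) :=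
      ⟨hdiffble.mono Metric.ball_subset_closedBall, by
        rw [closure_ball (0 : ℂ) hρ0.ne']; exact hdiffble.continuousOn⟩
    have hfront : ∀ z ∈ frontier (Metric.ball (0 : ℂ) ρ), ‖φf z‖ ≤ 2 * M / ρ ^ d := by
      intro z hz
      rw [frontier_ball (0 : ℂ) hρ0.ne'] at hz
      have hzn : ‖z‖ = ρ := by simpa [mem_sphere_iff_norm] using hz
      have hzr : ‖z‖ < r := by rw [hzn]; exact hρr
      have h2M := hdiff_bound z hzr
      rw [hFeq z (hden z hzr).1 (hden z hzr).2] at h2M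
      rw [norm_mul, norm_pow, hzn] at h2M
      rw [le_div_iff₀ (by positivity)]
      calc ‖φf z‖ * ρ ^ d = ρ ^ d * ‖φf z‖ := by ring
        _ ≤ 2 * M := h2M
    have h1mem : (1 : ℂ) ∈ closure (Metric.ball (0 : ℂ) ρ) := by
      rw [closure_ball (0 : ℂ) hρ0.ne']
      simpa [Metric.mem_closedBall, dist_zero_right] using hρ1
    exact Complex.norm_le_of_forall_mem_frontier_norm_le Metric.isBounded_ball hdc hfront h1mem
  have hr0 : (0 : ℝ) < r := lt_trans one_pos hr
  have hlim : ‖φf 1‖ ≤ 2 * M / r ^ d := by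
    have hten : Filter.Tendsto (fun ρ : ℝ => 2 * M / ρ ^ d) (nhdsWithin r (Set.Iio r))
        (nhds (2 * M / r ^ d)) := by
      refine Filter.Tendsto.mono_left ?_ nhdsWithin_le_nhds
      exact (ContinuousAt.div continuousAt_const (continuousAt_pow r d)
        (pow_ne_zero d hr0.ne')).tendsto
    refine ge_of_tendsto hten ?_
    filter_upwards [Ioo_mem_nhdsLT_of_mem (Set.mem_Ioc.2 ⟨hr, le_refl r⟩)] with ρ hρ
    exact hρbound ρ (le_of_lt hρ.1) hρ.2
  have h1r : ‖(1 : ℂ)‖ < r := by simpa using hr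
  have hZ2 : Zcond G A Λ σ ≠ 0 := by
    intro h0
    apply (hboundσ 1 h1r).1
    rw [Zcond_ofReal, h0, Complex.ofReal_zero]
  have hZ4 : Zcond G A Λ τ ≠ 0 := by
    intro h0
    apply (hboundτ 1 h1r).1
    rw [Zcond_ofReal, h0, Complex.ofReal_zero]
  have hF1 : Q1.eval 1 / Q2.eval 1 - Q3.eval 1 / Q4.eval 1
      = ((condProb G A Λ σ v i - condProb G A Λ τ v i : ℝ) : ℂ) := by
    rw [hQ1, hQ2, hQ3, hQ4, Zpoly_eval, Zpoly_eval, Zpoly_eval, Zpoly_eval,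
      Zcond_ofReal, Zcond_ofReal, Zcond_ofReal, Zcond_ofReal, condProb, condProb]
    push_cast
    ring
  have hφf1 : ((condProb G A Λ σ v i - condProb G A Λ τ v i : ℝ) : ℂ) = φf 1 := by
    rw [← hF1, hFeq 1 (hden 1 h1r).1 (hden 1 h1r).2, one_pow, one_mul]
  have hnorm : |condProb G A Λ σ v i - condProb G A Λ τ v i| = ‖φf 1‖ := by
    rw [← hφf1, Complex.norm_real, Real.norm_eq_abs]
  rw [hnorm]
  calc ‖φf 1‖ ≤ 2 * M / r ^ d := hlim
    _ = 2 * M * r ^ (-(d : ℤ)) := by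
      rw [zpow_neg, zpow_natCast, div_eq_mul_inv]



end Aux


/-- Vertices of a graph in a family: elements of a finite subset of `ℕ`. -/
abbrev Vtx (s : Finset ℕ) : Type := {x : ℕ // x ∈ s}

/-- Let `A` be a nonnegative, nonzero, symmetric real `q × q` matrix and
`𝒢` a family of finite graphs.  Suppose there are `r > 1` and `M > 0` such that for all
`z` in the open disk `𝔻_r`, all `G ∈ 𝒢`, all vertices `v`, colors `i` and boundary
conditions `σ` on sets `Λ ⊆ V ∖ {v}`, the ratio `P^σ_{G,v,i;A}` has no pole at `z`
(its denominator is nonzero) and `|P^σ_{G,v,i;A}(z)| ≤ M`.  Then there is `C > 0` such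
that `μ_{G,A}` satisfies strong spatial mixing on `𝒢` with exponential rate `r`. -/
theorem bounded_hom_ratios_imply_SSM (q : ℕ) (hq : 2 ≤ q)
    (A : Matrix (Fin q) (Fin q) ℝ) (hsymm : ∀ i j, A i j = A j i)
    (hnonneg : ∀ i j, 0 ≤ A i j) (hnonzero : A ≠ 0)
    (𝒢 : ∀ s : Finset ℕ, SimpleGraph (Vtx s) → Prop)
    (r M : ℝ) (hr : 1 < r) (hM : 0 < M)
    (hbound : ∀ z : ℂ, ‖z‖ < r → ∀ s G, 𝒢 s G →
      ∀ (v : Vtx s) (i : Fin q) (Λ : Finset (Vtx s)), v ∉ Λ → ∀ σ : Vtx s → Fin q,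
        Zcond G (intMat A z) Λ σ ≠ 0 ∧ ‖ratio G A Λ σ v i z‖ ≤ M) :
    ∃ C > 0, ∀ s G, 𝒢 s G →
      ∀ (v : Vtx s) (i : Fin q) (Λ : Finset (Vtx s)), v ∉ Λ →
        ∀ σ τ : Vtx s → Fin q, ∀ d : ℕ,
          (∀ u ∈ Λ, σ u ≠ τ u → (d : ℕ∞) ≤ G.edist v u) →
          |condProb G A Λ σ v i - condProb G A Λ τ v i| ≤ C * r ^ (-(d : ℤ)) := by
  refine ⟨2 * M, by positivity, ?_⟩
  intro s G hG v i Λ hv σ τ d hdist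
  exact main_aux A G r M hr hM v i Λ hv σ τ d hdist
    (fun z hz => hbound z hz s G hG v i Λ hv σ)
    (fun z hz => hbound z hz s G hG v i Λ hv τ)

end GraphHom

end
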